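/- Let H ⊂ C^{n+1} be a set such that 0 ∈ H and λZ ∈ H for every Z ∈ H and λ ∈ C*. If the closure of H is an analytic subvariety of C^{n+1} whose ideal of germs at 0 is generated by holomorphic functions h_1,…,h_m, then there exists j_0 such that the closure of H agrees, as a germ at 0, with the common zero set of the homogeneous Taylor components h_{kμ} of degree μ ≤ j_0 of the generators; in particular the germ of H̄ at 0 is the germ of an algebraic cone. -/

import Mathlib

open MvPolynomial
open scoped NNReal ENNReal

lemma eval_smul_isHomogeneous {N μ : ℕ} {p : MvPolynomial (Fin N) ℂ}
    (hp : p.IsHomogeneous μ) (c : ℂ) (Z : Fin N → ℂ) :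
    eval (c • Z) p = c ^ μ * eval Z p := by
  rw [eval_eq, eval_eq, Finset.mul_sum]
  refine Finset.sum_congr rfl fun d hd => ?_
  have hw := hp (mem_support_iff.mp hd)
  simp only [Pi.smul_apply, smul_eq_mul, mul_pow, Finset.prod_mul_distrib,
    Finset.prod_pow_eq_pow_sum]
  rw [show ∑ i ∈ d.support, d i = μ by
    simpa [Finsupp.weight_apply, Finsupp.sum] using hw]
  ring

lemma coeffs_eq_zero {a : ℕ → ℂ} (ha : Summable a)
    (h : ∀ c : ℂ, ‖c‖ < 1 → ∑' μ : ℕ, c ^ μ * a μ = 0) : ∀ μ, a μ = 0 := by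
  set p := FormalMultilinearSeries.ofScalars ℂ a with hpdef
  have hcoeff : ∀ n, p.coeff n = a n := fun n => by
    show (FormalMultilinearSeries.ofScalars ℂ a) n (fun _ => (1:ℂ)) = a n
    rw [FormalMultilinearSeries.ofScalars_apply_eq]
    simp
  have hnorm : Summable fun n : ℕ => ‖p n‖ * (1 : ℝ≥0) ^ n := by
    simpa [FormalMultilinearSeries.ofScalars_norm, hcoeff]
      using summable_norm_iff.mpr ha
  have hrad : (1 : ℝ≥0∞) ≤ p.radius := by
    simpa using p.le_radius_of_summable_norm hnorm
  have hball : HasFPowerSeriesOnBall (0 : ℂ → ℂ) p 0 1 :=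
    { r_le := hrad
      r_pos := one_pos
      hasSum := by
        intro y hy
        have hy1 : ‖y‖ < 1 := by
          rw [EMetric.mem_ball, edist_zero_right, enorm_eq_nnnorm] at hy
          exact_mod_cast hy
        have hs : Summable fun n : ℕ => y ^ n * a n :=
          (summable_norm_iff.mpr ha).of_norm_bounded (fun n => by
            rw [norm_mul, norm_pow]
            exact mul_le_of_le_one_left (norm_nonneg _)
              (pow_le_one₀ (norm_nonneg _) hy1.le))
        have h0 := hs.hasSum
        rw [h y hy1] at h0
        simpa [FormalMultilinearSeries.ofScalars_apply_eq, hcoeff, smul_eq_mul,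
          mul_comm] using h0 }
  have hp0 : p = 0 := hball.hasFPowerSeriesAt.eq_zero
  intro μ
  have h1 : p μ = 0 := by rw [hp0]; rfl
  rwa [hpdef, FormalMultilinearSeries.ofScalars_eq_zero] at h1

/-- Chow-type argument: let `H ⊂ ℂ^{n+1}` be a cone (`0 ∈ H`, stable under `ℂ*`-scaling)
whose closure is, near `0`, the common zero set of holomorphic functions
`h_k = Σ_μ (P k μ)` with homogeneous Taylor components `P k μ` of degree `μ`.
Then there is `j₀` such that, as a germ at `0`, the closure of `H` coincides with the
common zero set of the finitely many homogeneous components `P k μ`, `μ ≤ j₀`;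
in particular the germ of `H̄` at `0` is the germ of an algebraic cone. -/
theorem cone_germ_is_algebraic (n m : ℕ) (H : Set (Fin (n + 1) → ℂ))
    (h0 : (0 : Fin (n + 1) → ℂ) ∈ H)
    (hcone : ∀ Z ∈ H, ∀ c : ℂ, c ≠ 0 → c • Z ∈ H)
    (P : Fin m → ℕ → MvPolynomial (Fin (n + 1)) ℂ)
    (hhom : ∀ k μ, (P k μ).IsHomogeneous μ)
    (r : ℝ) (hr : 0 < r)
    (hsum : ∀ k : Fin m, ∀ Z ∈ Metric.ball (0 : Fin (n + 1) → ℂ) r,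
      Summable (fun μ : ℕ => eval Z (P k μ)))
    (hvar : ∀ Z ∈ Metric.ball (0 : Fin (n + 1) → ℂ) r,
      (Z ∈ closure H ↔ ∀ k : Fin m, ∑' μ : ℕ, eval Z (P k μ) = 0)) :
    ∃ j₀ : ℕ, ∃ ε > 0, ∀ Z ∈ Metric.ball (0 : Fin (n + 1) → ℂ) ε,
      (Z ∈ closure H ↔ ∀ k : Fin m, ∀ μ ≤ j₀, eval Z (P k μ) = 0) := by
  classical
  -- The increasing chain of ideals generated by homogeneous components of degree ≤ j
  let chain : ℕ →o Ideal (MvPolynomial (Fin (n + 1)) ℂ) :=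
    ⟨fun j => Ideal.span {p : MvPolynomial (Fin (n + 1)) ℂ | ∃ k, ∃ μ ≤ j, P k μ = p}, by
      intro i j hij
      exact Ideal.span_mono (fun p ⟨k, μ, hμ, hp⟩ => ⟨k, μ, hμ.trans hij, hp⟩)⟩
  obtain ⟨j₀, hj₀⟩ := monotone_stabilizes_iff_noetherian.mpr (inferInstance : IsNoetherianRing (MvPolynomial (Fin (n + 1)) ℂ)) chain
  have hmemchain : ∀ k μ, P k μ ∈ chain j₀ := by
    intro k μ
    have h1 : P k μ ∈ chain (max μ j₀) :=
      Ideal.subset_span ⟨k, μ, le_max_left _ _, rfl⟩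
    rwa [← hj₀ (max μ j₀) (le_max_right _ _)] at h1
  refine ⟨j₀, r, hr, fun Z hZ => ?_⟩
  constructor
  · -- forward: on the closure of the cone, all homogeneous components vanish
    intro hZc k μ hμ
    refine coeffs_eq_zero (hsum k Z hZ) (fun c hc => ?_) μ
    have hcZball : c • Z ∈ Metric.ball (0 : Fin (n + 1) → ℂ) r := by
      rw [mem_ball_zero_iff] at hZ ⊢
      calc ‖c • Z‖ = ‖c‖ * ‖Z‖ := norm_smul c Z
        _ ≤ 1 * ‖Z‖ := mul_le_mul_of_nonneg_right hc.le (norm_nonneg _)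
        _ < r := by simpa using hZ
    have hcZ : c • Z ∈ closure H := by
      rcases eq_or_ne c 0 with hc0 | hc0
      · simpa [hc0] using subset_closure h0
      · exact map_mem_closure (continuous_const_smul c) hZc
          (fun w hw => hcone w hw c hc0)
    calc ∑' ν : ℕ, c ^ ν * eval Z (P k ν)
        = ∑' ν : ℕ, eval (c • Z) (P k ν) :=
          tsum_congr fun ν => (eval_smul_isHomogeneous (hhom k ν) c Z).symm
      _ = 0 := (hvar _ hcZball).mp hcZ k
  · -- backward: vanishing of the components of degree ≤ j₀ forces all to vanish
    intro hcomp
    rw [hvar Z hZ]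
    intro k
    have hker : chain j₀ ≤ RingHom.ker (eval Z) := by
      show Ideal.span {p : MvPolynomial (Fin (n + 1)) ℂ | ∃ k, ∃ μ ≤ j₀, P k μ = p} ≤
        RingHom.ker (eval Z)
      rw [Ideal.span_le]
      rintro p ⟨k', μ', hμ', rfl⟩
      exact RingHom.mem_ker.mpr (hcomp k' μ' hμ')
    have hall : ∀ μ, eval Z (P k μ) = 0 := fun μ =>
      RingHom.mem_ker.mp (hker (hmemchain k μ))
    simp [hall]
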